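/- Let S be a finite set, r ≥ 2, and let φ : S → {0,1}^r be an injective function. Define T = {(x, i, j, b₁, b₂) : x ∈ S, i, j ∈ [r], i ≠ j, b₁, b₂ ∈ {0,1}, (b₁, b₂) ≠ (1 − φ(x)[i], 1 − φ(x)[j])}. Then for every triple of pairwise distinct elements x₁, x₂, x₃ ∈ S there exist i ≠ j in [r] and bits b₁, b₂ ∈ {0,1} such that (x₁, i, j, b₁, b₂) ∈ T, (x₂, i, j, b₁, b₂) ∈ T, and (x₃, i, j, b₁, b₂) ∉ T. -/
import Mathlib


/-- The set `T = {(x, i, j, b₁, b₂) : i ≠ j, (b₁, b₂) ≠ (1 − φ(x)[i], 1 − φ(x)[j])}`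
(bits modelled by `Bool`, complement by `!`). -/
def TSet {S : Type*} (r : ℕ) (φ : S → Fin r → Bool) :
    Set (S × Fin r × Fin r × Bool × Bool) :=
  {q | match q with
    | (x, i, j, b₁, b₂) => i ≠ j ∧ (b₁, b₂) ≠ (!(φ x i), !(φ x j))}

/-- For an injective `φ : S → {0,1}^r` and pairwise distinct `x₁, x₂, x₃ ∈ S`, there are
`i ≠ j` and bits `b₁, b₂` with `(x₁,i,j,b₁,b₂) ∈ T`, `(x₂,i,j,b₁,b₂) ∈ T`, and
`(x₃,i,j,b₁,b₂) ∉ T`. -/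
theorem stmt15 {S : Type*} [Fintype S] (r : ℕ) (hr : 2 ≤ r) (φ : S → Fin r → Bool)
    (hφ : Function.Injective φ) (x₁ x₂ x₃ : S)
    (h12 : x₁ ≠ x₂) (h13 : x₁ ≠ x₃) (h23 : x₂ ≠ x₃) :
    ∃ i j : Fin r, i ≠ j ∧ ∃ b₁ b₂ : Bool,
      (x₁, i, j, b₁, b₂) ∈ TSet r φ ∧ (x₂, i, j, b₁, b₂) ∈ TSet r φ ∧
      (x₃, i, j, b₁, b₂) ∉ TSet r φ := by
  haveI : Nontrivial (Fin r) := Fin.nontrivial_iff_two_le.2 hr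
  have hne1 : φ x₃ ≠ φ x₁ := fun h => h13 (hφ h).symm
  have hne2 : φ x₃ ≠ φ x₂ := fun h => h23 (hφ h).symm
  obtain ⟨i, hi⟩ := Function.ne_iff.1 hne1
  obtain ⟨j, hj⟩ := Function.ne_iff.1 hne2
  by_cases hij : i = j
  · subst hij
    obtain ⟨j, hji⟩ := exists_ne i
    refine ⟨i, j, fun h => hji h.symm, !(φ x₃ i), !(φ x₃ j), ?_, ?_, ?_⟩
    · exact ⟨fun h => hji h.symm, fun h => hi (by simpa using congrArg Prod.fst h)⟩
    · exact ⟨fun h => hji h.symm, fun h => hj (by simpa using congrArg Prod.fst h)⟩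
    · intro h; exact h.2 rfl
  · refine ⟨i, j, hij, !(φ x₃ i), !(φ x₃ j), ?_, ?_, ?_⟩
    · exact ⟨hij, fun h => hi (by simpa using congrArg Prod.fst h)⟩
    · exact ⟨hij, fun h => hj (by simpa using congrArg Prod.snd h)⟩
    · intro h; exact h.2 rfl
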